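/- Let M = ℂ(t)(s) be the quadratic extension of the rational function field ℂ(t) obtained by adjoining an element s with s² = 1 - t³ (which is not a square in ℂ(t)). Then the element β = 1 + s is not a cube in M; moreover β·σ(β) = (1 + s)(1 - s) = t³ is a cube in ℂ(t)^×, where σ is the nontrivial ℂ(t)-automorphism of M (sending s to -s). Hence the triple α = 1 - t³, β = 1 + s satisfies: α ∈ ℂ(t)^× is not a square, β ∈ M^× is not a cube, and β·σ(β) ∈ (ℂ(t)^×)³. -/

import Mathlib

open Polynomial

lemma aux_notsq : ¬∃ f : RatFunc ℂ, f ^ 2 = 1 - RatFunc.X ^ 3 := by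
  rintro ⟨f, hf⟩
  have hu : (1 - RatFunc.X ^ 3 : RatFunc ℂ)
      = algebraMap (Polynomial ℂ) (RatFunc ℂ) (1 - X ^ 3) := by
    simp [map_sub, map_pow, RatFunc.algebraMap_X]
  have hpu : (1 - X ^ 3 : Polynomial ℂ) ≠ 0 := by
    intro h
    have := natDegree_X_pow_sub_C (n := 3) (r := (1 : ℂ))
    rw [map_one] at this
    have h' : (X ^ 3 - 1 : Polynomial ℂ) = 0 := by linear_combination -h
    rw [h'] at this
    simp at this
  have hune : (1 - RatFunc.X ^ 3 : RatFunc ℂ) ≠ 0 := by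
    rw [hu]
    simpa using (RatFunc.algebraMap_ne_zero hpu)
  have hf0 : f ≠ 0 := by
    intro h; rw [h] at hf; simp at hf; exact hune hf.symm
  have hdeg : (f ^ 2).intDegree = 2 * f.intDegree := by
    rw [pow_two, RatFunc.intDegree_mul hf0 hf0]; ring
  have hdeg3 : (1 - RatFunc.X ^ 3 : RatFunc ℂ).intDegree = 3 := by
    rw [hu, RatFunc.intDegree_polynomial]
    norm_cast
    have := natDegree_X_pow_sub_C (n := 3) (r := (1 : ℂ))
    rw [map_one] at this
    rw [show (1 - X ^ 3 : Polynomial ℂ) = -(X^3 - 1) by ring, natDegree_neg, this]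
  rw [hf, hdeg3] at hdeg
  omega

lemma aux_poly (Q P : Polynomial ℂ) (hQ : Q ^ 3 = X ^ 3) (hP : P ^ 3 - 3 * Q * P = 2) :
    False := by
  have hQ0 : Q ≠ 0 := by
    intro h
    have hx : (X : Polynomial ℂ) ^ 3 = 0 := by rw [← hQ, h]; simp
    exact pow_ne_zero 3 X_ne_zero hx
  have hQdeg : Q.natDegree = 1 := by
    have := congrArg natDegree hQ
    rw [natDegree_pow, natDegree_pow, natDegree_X] at this
    omega
  have hP0 : P ≠ 0 := by
    intro h; rw [h] at hP; simp at hP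
  -- degree of P is 0
  have hPd : P.natDegree = 0 := by
    by_contra hn
    have hn1 : 1 ≤ P.natDegree := Nat.one_le_iff_ne_zero.mpr hn
    have h1 : (P ^ 3).natDegree = 3 * P.natDegree := by rw [natDegree_pow]
    have h2 : (3 * Q * P + 2).natDegree ≤ P.natDegree + 1 := by
      refine le_trans (natDegree_add_le _ _) ?_
      simp only [natDegree_ofNat, max_le_iff]
      constructor
      · refine le_trans (natDegree_mul_le) ?_
        have : (3 * Q : Polynomial ℂ).natDegree ≤ 1 := by
          refine le_trans natDegree_mul_le ?_
          simp [hQdeg]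
        omega
      · omega
    have hEq : P ^ 3 = 3 * Q * P + 2 := by linear_combination hP
    rw [hEq] at h1
    omega
  obtain ⟨c, hc⟩ := natDegree_eq_zero.mp hPd
  have hc0 : c ≠ 0 := by rintro rfl; simp at hc; exact hP0 hc.symm
  rw [← hc] at hP
  -- 3 * Q * C c = C c ^ 3 - 2
  have h2 : (C (2 : ℂ) : Polynomial ℂ) = 2 := map_ofNat C 2
  have hQc : 3 * C c * Q = C (c ^ 3 - 2) := by
    rw [map_sub, map_pow]
    linear_combination -hP + h2
  have := congrArg natDegree hQc
  rw [natDegree_C, natDegree_mul (by simp [hc0]) hQ0, hQdeg] at this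
  · simp at this

/-- In the quadratic extension `M = ℂ(t)(s)` with `s² = 1 - t³`, the element `β = 1 + s` is
nonzero and not a cube, while `β·σ(β) = t³` is a cube in `ℂ(t)ˣ` (where `σ(s) = -s`); and
`α = 1 - t³` is not a square in `ℂ(t)`. -/
theorem stmt_11 {M : Type*} [Field M] [Algebra (RatFunc ℂ) M]
    (s : M) (hs : s ^ 2 = algebraMap (RatFunc ℂ) M (1 - RatFunc.X ^ 3))
    (hgen : Algebra.adjoin (RatFunc ℂ) {s} = ⊤)
    (σ : M ≃ₐ[RatFunc ℂ] M) (hσ : σ s = -s) :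
    (1 + s ≠ 0) ∧
    (¬∃ x : M, x ^ 3 = 1 + s) ∧
    (1 + s) * σ (1 + s) = algebraMap (RatFunc ℂ) M (RatFunc.X ^ 3) ∧
    (∃ γ : RatFunc ℂ, γ ≠ 0 ∧ (1 + s) * σ (1 + s) = algebraMap (RatFunc ℂ) M (γ ^ 3)) ∧
    (¬∃ f : RatFunc ℂ, f ^ 2 = 1 - RatFunc.X ^ 3) := by
  set φ := algebraMap (RatFunc ℂ) M with hφ
  have hinj : Function.Injective φ := φ.injective
  set u : RatFunc ℂ := 1 - RatFunc.X ^ 3 with hu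
  -- s is not in the base field
  have hsnot : ∀ f : RatFunc ℂ, φ f ≠ s := by
    intro f hf
    apply aux_notsq
    refine ⟨f, hinj ?_⟩
    rw [map_pow, hf, hs]
  -- linear independence of 1, s
  have indep : ∀ a b : RatFunc ℂ, φ a + φ b * s = 0 → a = 0 ∧ b = 0 := by
    intro a b hab
    by_cases hb : b = 0
    · subst hb
      simp only [map_zero, zero_mul, add_zero] at hab
      exact ⟨hinj (by rw [hab, map_zero]), rfl⟩
    · exfalso
      apply hsnot (-(a / b))
      rw [map_neg, map_div₀]
      field_simp
      have hbφ : φ b ≠ 0 := fun h => hb (hinj (by rw [h, map_zero]))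
      field_simp
      linear_combination -hab
  -- every element is a + b s
  have repr : ∀ x : M, ∃ a b : RatFunc ℂ, x = φ a + φ b * s := by
    intro x
    have hx : x ∈ Algebra.adjoin (RatFunc ℂ) {s} := by rw [hgen]; trivial
    induction hx using Algebra.adjoin_induction with
    | mem y hy =>
      rw [Set.mem_singleton_iff] at hy
      exact ⟨0, 1, by rw [hy]; simp⟩
    | algebraMap r => exact ⟨r, 0, by simp [hφ]⟩
    | add y z hy hz ihy ihz =>
      obtain ⟨a, b, rfl⟩ := ihy
      obtain ⟨c, d, rfl⟩ := ihz
      exact ⟨a + c, b + d, by simp only [map_add]; ring⟩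
    | mul y z hy hz ihy ihz =>
      obtain ⟨a, b, rfl⟩ := ihy
      obtain ⟨c, d, rfl⟩ := ihz
      refine ⟨a * c + b * d * u, a * d + b * c, ?_⟩
      simp only [map_add, map_mul]
      linear_combination (φ b * φ d) * hs
  -- Part 1
  have part1 : (1 : M) + s ≠ 0 := by
    intro h
    apply hsnot (-1)
    rw [map_neg, map_one]
    linear_combination -h
  -- Part 3
  have hσβ : σ (1 + s) = 1 - s := by rw [map_add, map_one, hσ]; ring
  have part3 : (1 + s) * σ (1 + s) = φ (RatFunc.X ^ 3) := by
    rw [hσβ]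
    have : (1 + s) * (1 - s) = 1 - s ^ 2 := by ring
    rw [this, hs, ← map_one φ, ← map_sub]
    congr 1
    rw [hu]; ring
  -- Part 2
  have part2 : ¬∃ x : M, x ^ 3 = 1 + s := by
    rintro ⟨x, hx⟩
    obtain ⟨a, b, rfl⟩ := repr x
    have key : (φ a + φ b * s) ^ 3
        = ((φ a) ^ 3 + 3 * φ a * (φ b) ^ 2 * φ u) + (3 * (φ a) ^ 2 * φ b + (φ b) ^ 3 * φ u) * s := by
      linear_combination (3 * φ a * (φ b) ^ 2 + (φ b) ^ 3 * s) * hs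
    have hE : φ (a ^ 3 + 3 * a * b ^ 2 * u - 1) + φ (3 * a ^ 2 * b + b ^ 3 * u - 1) * s = 0 := by
      simp only [map_sub, map_add, map_mul, map_pow, map_one, map_ofNat]
      linear_combination hx - key
    obtain ⟨hE1, hE2⟩ := indep _ _ hE
    have E1 : a ^ 3 + 3 * a * b ^ 2 * u = 1 := by linear_combination hE1
    have E2 : 3 * a ^ 2 * b + b ^ 3 * u = 1 := by linear_combination hE2
    -- y = conjugate
    have key2 : (φ a - φ b * s) ^ 3
        = ((φ a) ^ 3 + 3 * φ a * (φ b) ^ 2 * φ u) - (3 * (φ a) ^ 2 * φ b + (φ b) ^ 3 * φ u) * s := by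
      linear_combination (3 * φ a * (φ b) ^ 2 - (φ b) ^ 3 * s) * hs
    have hy3 : (φ a - φ b * s) ^ 3 = 1 - s := by
      rw [key2]
      have e1 : (φ a) ^ 3 + 3 * φ a * (φ b) ^ 2 * φ u = 1 := by
        have := congrArg φ E1
        simpa only [map_add, map_mul, map_pow, map_one, map_ofNat] using this
      have e2 : 3 * (φ a) ^ 2 * φ b + (φ b) ^ 3 * φ u = 1 := by
        have := congrArg φ E2
        simpa only [map_add, map_mul, map_pow, map_one, map_ofNat] using this
      rw [e1, e2]
      ring
    -- product
    have hxy : (φ a + φ b * s) * (φ a - φ b * s) = φ (a ^ 2 - b ^ 2 * u) := by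
      simp only [map_sub, map_mul, map_pow]
      linear_combination -(φ b) ^ 2 * hs
    have hq3 : (a ^ 2 - b ^ 2 * u) ^ 3 = RatFunc.X ^ 3 := by
      apply hinj
      rw [map_pow, ← hxy, mul_pow, hx, hy3, map_pow]
      have : (1 + s) * (1 - s) = 1 - s ^ 2 := by ring
      rw [this, hs, ← map_one φ, ← map_sub, ← map_pow]
      congr 1
      rw [hu]; ring
    have hpq : (2 * a) ^ 3 - 3 * (2 * a) * (a ^ 2 - b ^ 2 * u) = 2 := by
      linear_combination 2 * E1
    -- integrality over ℂ[X]
    set ψ := algebraMap (Polynomial ℂ) (RatFunc ℂ) with hψ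
    have hψinj : Function.Injective ψ := RatFunc.algebraMap_injective ℂ
    have hψX : ψ X = RatFunc.X := RatFunc.algebraMap_X
    have hqint : IsIntegral (Polynomial ℂ) (a ^ 2 - b ^ 2 * u) := by
      refine ⟨X ^ 3 - C (X ^ 3 : Polynomial ℂ), monic_X_pow_sub ?_, ?_⟩
      · exact lt_of_le_of_lt degree_C_le (by norm_num)
      · simp only [eval₂_sub, eval₂_X_pow, eval₂_C]
        rw [hq3, ← hψ, map_pow, hψX]
        ring
    obtain ⟨Q, hQ⟩ := IsIntegrallyClosed.isIntegral_iff.mp hqint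
    have hQ3 : Q ^ 3 = X ^ 3 := by
      apply hψinj
      rw [map_pow, hQ, hq3, map_pow, hψX]
    have hpint : IsIntegral (Polynomial ℂ) (2 * a : RatFunc ℂ) := by
      refine ⟨X ^ 3 - (C (3 * Q) * X + C 2), monic_X_pow_sub ?_, ?_⟩
      · exact lt_of_le_of_lt degree_linear_le (by norm_num)
      · simp only [eval₂_sub, eval₂_add, eval₂_mul, eval₂_X_pow, eval₂_X, eval₂_C]
        rw [← hψ, map_mul, hQ]
        have h3 : ψ (3 : Polynomial ℂ) = 3 := map_ofNat ψ 3
        have h2 : ψ (2 : Polynomial ℂ) = 2 := map_ofNat ψ 2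
        rw [h3, h2]
        linear_combination hpq
    obtain ⟨P, hP⟩ := IsIntegrallyClosed.isIntegral_iff.mp hpint
    have hPeq : P ^ 3 - 3 * Q * P = 2 := by
      apply hψinj
      have h3 : ψ (3 : Polynomial ℂ) = 3 := map_ofNat ψ 3
      have h2 : ψ (2 : Polynomial ℂ) = 2 := map_ofNat ψ 2
      rw [map_sub, map_pow, map_mul, map_mul, h3, h2, hP, hQ]
      linear_combination hpq
    exact aux_poly Q P hQ3 hPeq
  refine ⟨part1, part2, part3, ⟨RatFunc.X, RatFunc.X_ne_zero, part3⟩, aux_notsq⟩
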